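/- The five vector fields Ξ₁ = ∂_t, Ξ₂ = ∂_x, Ξ₃ = 2t ∂_t + x ∂_x - u ∂_u - 2v ∂_v, Ξ₄ = t ∂_x + 2 ∂_u - u ∂_v, Ξ₅ = t² ∂_t + t x ∂_x + (2x - t u) ∂_u - (x u + 2 t v + 2) ∂_v on ℝ⁴ with coordinates (t,x,u,v) are closed under the Lie bracket and span a five-dimensional Lie algebra. -/

import Mathlib

abbrev E4 : Type := ℝ × ℝ × ℝ × ℝ

/-- Lie bracket of vector fields on `ℝ⁴`, `[X,Y] = X(Y) - Y(X)`. -/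
noncomputable def vbracket (X Y : E4 → E4) : E4 → E4 :=
  fun p => fderiv ℝ Y p (X p) - fderiv ℝ X p (Y p)

/-- The five point symmetry generators of the two-component Burgers-like
system, as vector fields on `ℝ⁴` with coordinates `(t,x,u,v)`. -/
def Xi : Fin 5 → E4 → E4 :=
  ![fun _ => (1, 0, 0, 0),
    fun _ => (0, 1, 0, 0),
    fun p => (2 * p.1, p.2.1, -p.2.2.1, -2 * p.2.2.2),
    fun p => (0, p.1, 2, -p.2.2.1),
    fun p => (p.1 ^ 2, p.1 * p.2.1, 2 * p.2.1 - p.1 * p.2.2.1,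
      -(p.2.1 * p.2.2.1 + 2 * p.1 * p.2.2.2 + 2))]

lemma fd0 (p w : E4) : fderiv ℝ (Xi 0) p w = 0 := by
  have h : HasFDerivAt (Xi 0) (0 : E4 →L[ℝ] E4) p := hasFDerivAt_const _ _
  rw [h.fderiv]; rfl

lemma fd1 (p w : E4) : fderiv ℝ (Xi 1) p w = 0 := by
  have h : HasFDerivAt (Xi 1) (0 : E4 →L[ℝ] E4) p := hasFDerivAt_const _ _
  rw [h.fderiv]; rfl

lemma fd2 (p w : E4) : fderiv ℝ (Xi 2) p w = (2 * w.1, w.2.1, -w.2.2.1, -2 * w.2.2.2) := by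
  have h := HasFDerivAt.prodMk (HasFDerivAt.const_mul (hasFDerivAt_fst (𝕜 := ℝ) (p := p)) 2)
    (HasFDerivAt.prodMk ((hasFDerivAt_snd (𝕜 := ℝ) (p := p)).fst)
      (HasFDerivAt.prodMk (HasFDerivAt.neg ((hasFDerivAt_snd (𝕜 := ℝ) (p := p)).snd.fst))
        (HasFDerivAt.const_mul ((hasFDerivAt_snd (𝕜 := ℝ) (p := p)).snd.snd) (-2))))
  have h' : HasFDerivAt (Xi 2) _ p := h
  rw [h'.fderiv]
  simp [ContinuousLinearMap.prod_apply, Function.comp]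

lemma fd3 (p w : E4) : fderiv ℝ (Xi 3) p w = (0, w.1, 0, -w.2.2.1) := by
  have h := HasFDerivAt.prodMk (hasFDerivAt_const (𝕜 := ℝ) (x := p) (0:ℝ))
    (HasFDerivAt.prodMk (hasFDerivAt_fst (𝕜 := ℝ) (p := p))
      (HasFDerivAt.prodMk (hasFDerivAt_const (𝕜 := ℝ) (x := p) (2:ℝ))
        (HasFDerivAt.neg ((hasFDerivAt_snd (𝕜 := ℝ) (p := p)).snd.fst))))
  have h' : HasFDerivAt (Xi 3) _ p := h
  rw [h'.fderiv]
  simp [ContinuousLinearMap.prod_apply, Function.comp]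

lemma fd4 (p w : E4) : fderiv ℝ (Xi 4) p w =
    (2 * p.1 * w.1, p.1 * w.2.1 + p.2.1 * w.1,
     2 * w.2.1 - (p.1 * w.2.2.1 + p.2.2.1 * w.1),
     -(p.2.1 * w.2.2.1 + p.2.2.1 * w.2.1 + (2 * p.1 * w.2.2.2 + 2 * p.2.2.2 * w.1))) := by
  have h := HasFDerivAt.prodMk ((hasDerivAt_pow 2 p.1).comp_hasFDerivAt p (hasFDerivAt_fst (𝕜 := ℝ) (p := p)))
    (HasFDerivAt.prodMk (HasFDerivAt.mul (hasFDerivAt_fst (𝕜 := ℝ) (p := p)) ((hasFDerivAt_snd (𝕜 := ℝ) (p := p)).fst))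
      (HasFDerivAt.prodMk (HasFDerivAt.sub (HasFDerivAt.const_mul (hasFDerivAt_snd (𝕜 := ℝ) (p := p)).fst 2)
          (HasFDerivAt.mul (hasFDerivAt_fst (𝕜 := ℝ) (p := p)) (hasFDerivAt_snd (𝕜 := ℝ) (p := p)).snd.fst))
        (HasFDerivAt.neg (HasFDerivAt.add (HasFDerivAt.add
            (HasFDerivAt.mul (hasFDerivAt_snd (𝕜 := ℝ) (p := p)).fst (hasFDerivAt_snd (𝕜 := ℝ) (p := p)).snd.fst)
            (HasFDerivAt.mul (HasFDerivAt.const_mul (hasFDerivAt_fst (𝕜 := ℝ) (p := p)) 2) (hasFDerivAt_snd (𝕜 := ℝ) (p := p)).snd.snd))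
              (hasFDerivAt_const (x := p) (2:ℝ))))))
  have h' : HasFDerivAt (Xi 4) _ p := h
  rw [h'.fderiv]
  simp [ContinuousLinearMap.prod_apply, Function.comp, Prod.ext_iff]
  ring

section eval
variable (p : E4)
lemma Xie0 : Xi 0 p = (1, 0, 0, 0) := rfl
lemma Xie1 : Xi 1 p = (0, 1, 0, 0) := rfl
lemma Xie2 : Xi 2 p = (2 * p.1, p.2.1, -p.2.2.1, -2 * p.2.2.2) := rfl
lemma Xie3 : Xi 3 p = (0, p.1, 2, -p.2.2.1) := rfl
lemma Xie4 : Xi 4 p = (p.1 ^ 2, p.1 * p.2.1, 2 * p.2.1 - p.1 * p.2.2.1,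
    -(p.2.1 * p.2.2.1 + 2 * p.1 * p.2.2.2 + 2)) := rfl
end eval

lemma mem_span_Xi (k : Fin 5) : Xi k ∈ Submodule.span ℝ (Set.range Xi) :=
  Submodule.subset_span ⟨k, rfl⟩

lemma smul_mem_span_Xi (c : ℝ) (k : Fin 5) :
    c • Xi k ∈ Submodule.span ℝ (Set.range Xi) :=
  Submodule.smul_mem _ c (mem_span_Xi k)

lemma br00 : vbracket (Xi 0) (Xi 0) = (0 : E4 → E4) := by
  funext p
  simp only [vbracket, fd0, fd1, fd2, fd3, fd4, Xie0, Xie1, Xie2, Xie3, Xie4,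
    Pi.smul_apply, Pi.zero_apply, Prod.smul_mk, smul_eq_mul, Prod.mk_sub_mk,
    sub_zero, zero_sub, Prod.mk.injEq, Prod.ext_iff]
  try norm_num
  try (repeat' apply And.intro)
  all_goals first | trivial | ring

lemma br01 : vbracket (Xi 0) (Xi 1) = (0 : E4 → E4) := by
  funext p
  simp only [vbracket, fd0, fd1, fd2, fd3, fd4, Xie0, Xie1, Xie2, Xie3, Xie4,
    Pi.smul_apply, Pi.zero_apply, Prod.smul_mk, smul_eq_mul, Prod.mk_sub_mk,
    sub_zero, zero_sub, Prod.mk.injEq, Prod.ext_iff]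
  try norm_num
  try (repeat' apply And.intro)
  all_goals first | trivial | ring

lemma br02 : vbracket (Xi 0) (Xi 2) = (2:ℝ) • Xi 0 := by
  funext p
  simp only [vbracket, fd0, fd1, fd2, fd3, fd4, Xie0, Xie1, Xie2, Xie3, Xie4,
    Pi.smul_apply, Pi.zero_apply, Prod.smul_mk, smul_eq_mul, Prod.mk_sub_mk,
    sub_zero, zero_sub, Prod.mk.injEq, Prod.ext_iff]
  try norm_num
  try (repeat' apply And.intro)
  all_goals first | trivial | ring

lemma br03 : vbracket (Xi 0) (Xi 3) = Xi 1 := by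
  funext p
  simp only [vbracket, fd0, fd1, fd2, fd3, fd4, Xie0, Xie1, Xie2, Xie3, Xie4,
    Pi.smul_apply, Pi.zero_apply, Prod.smul_mk, smul_eq_mul, Prod.mk_sub_mk,
    sub_zero, zero_sub, Prod.mk.injEq, Prod.ext_iff]
  try norm_num
  try (repeat' apply And.intro)
  all_goals first | trivial | ring

lemma br04 : vbracket (Xi 0) (Xi 4) = Xi 2 := by
  funext p
  simp only [vbracket, fd0, fd1, fd2, fd3, fd4, Xie0, Xie1, Xie2, Xie3, Xie4,
    Pi.smul_apply, Pi.zero_apply, Prod.smul_mk, smul_eq_mul, Prod.mk_sub_mk,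
    sub_zero, zero_sub, Prod.mk.injEq, Prod.ext_iff]
  try norm_num
  try (repeat' apply And.intro)
  all_goals first | trivial | ring

lemma br10 : vbracket (Xi 1) (Xi 0) = (0 : E4 → E4) := by
  funext p
  simp only [vbracket, fd0, fd1, fd2, fd3, fd4, Xie0, Xie1, Xie2, Xie3, Xie4,
    Pi.smul_apply, Pi.zero_apply, Prod.smul_mk, smul_eq_mul, Prod.mk_sub_mk,
    sub_zero, zero_sub, Prod.mk.injEq, Prod.ext_iff]
  try norm_num
  try (repeat' apply And.intro)
  all_goals first | trivial | ring

lemma br11 : vbracket (Xi 1) (Xi 1) = (0 : E4 → E4) := by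
  funext p
  simp only [vbracket, fd0, fd1, fd2, fd3, fd4, Xie0, Xie1, Xie2, Xie3, Xie4,
    Pi.smul_apply, Pi.zero_apply, Prod.smul_mk, smul_eq_mul, Prod.mk_sub_mk,
    sub_zero, zero_sub, Prod.mk.injEq, Prod.ext_iff]
  try norm_num
  try (repeat' apply And.intro)
  all_goals first | trivial | ring

lemma br12 : vbracket (Xi 1) (Xi 2) = Xi 1 := by
  funext p
  simp only [vbracket, fd0, fd1, fd2, fd3, fd4, Xie0, Xie1, Xie2, Xie3, Xie4,
    Pi.smul_apply, Pi.zero_apply, Prod.smul_mk, smul_eq_mul, Prod.mk_sub_mk,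
    sub_zero, zero_sub, Prod.mk.injEq, Prod.ext_iff]
  try norm_num
  try (repeat' apply And.intro)
  all_goals first | trivial | ring

lemma br13 : vbracket (Xi 1) (Xi 3) = (0 : E4 → E4) := by
  funext p
  simp only [vbracket, fd0, fd1, fd2, fd3, fd4, Xie0, Xie1, Xie2, Xie3, Xie4,
    Pi.smul_apply, Pi.zero_apply, Prod.smul_mk, smul_eq_mul, Prod.mk_sub_mk,
    sub_zero, zero_sub, Prod.mk.injEq, Prod.ext_iff]
  try norm_num
  try (repeat' apply And.intro)
  all_goals first | trivial | ring

lemma br14 : vbracket (Xi 1) (Xi 4) = Xi 3 := by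
  funext p
  simp only [vbracket, fd0, fd1, fd2, fd3, fd4, Xie0, Xie1, Xie2, Xie3, Xie4,
    Pi.smul_apply, Pi.zero_apply, Prod.smul_mk, smul_eq_mul, Prod.mk_sub_mk,
    sub_zero, zero_sub, Prod.mk.injEq, Prod.ext_iff]
  try norm_num
  try (repeat' apply And.intro)
  all_goals first | trivial | ring

lemma br20 : vbracket (Xi 2) (Xi 0) = (-2:ℝ) • Xi 0 := by
  funext p
  simp only [vbracket, fd0, fd1, fd2, fd3, fd4, Xie0, Xie1, Xie2, Xie3, Xie4,
    Pi.smul_apply, Pi.zero_apply, Prod.smul_mk, smul_eq_mul, Prod.mk_sub_mk,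
    sub_zero, zero_sub, Prod.mk.injEq, Prod.ext_iff]
  try norm_num
  try (repeat' apply And.intro)
  all_goals first | trivial | ring

lemma br21 : vbracket (Xi 2) (Xi 1) = (-1:ℝ) • Xi 1 := by
  funext p
  simp only [vbracket, fd0, fd1, fd2, fd3, fd4, Xie0, Xie1, Xie2, Xie3, Xie4,
    Pi.smul_apply, Pi.zero_apply, Prod.smul_mk, smul_eq_mul, Prod.mk_sub_mk,
    sub_zero, zero_sub, Prod.mk.injEq, Prod.ext_iff]
  try norm_num
  try (repeat' apply And.intro)
  all_goals first | trivial | ring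

lemma br22 : vbracket (Xi 2) (Xi 2) = (0 : E4 → E4) := by
  funext p
  simp only [vbracket, fd0, fd1, fd2, fd3, fd4, Xie0, Xie1, Xie2, Xie3, Xie4,
    Pi.smul_apply, Pi.zero_apply, Prod.smul_mk, smul_eq_mul, Prod.mk_sub_mk,
    sub_zero, zero_sub, Prod.mk.injEq, Prod.ext_iff]
  try norm_num
  try (repeat' apply And.intro)
  all_goals first | trivial | ring

lemma br23 : vbracket (Xi 2) (Xi 3) = Xi 3 := by
  funext p
  simp only [vbracket, fd0, fd1, fd2, fd3, fd4, Xie0, Xie1, Xie2, Xie3, Xie4,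
    Pi.smul_apply, Pi.zero_apply, Prod.smul_mk, smul_eq_mul, Prod.mk_sub_mk,
    sub_zero, zero_sub, Prod.mk.injEq, Prod.ext_iff]
  try norm_num
  try (repeat' apply And.intro)
  all_goals first | trivial | ring

lemma br24 : vbracket (Xi 2) (Xi 4) = (2:ℝ) • Xi 4 := by
  funext p
  simp only [vbracket, fd0, fd1, fd2, fd3, fd4, Xie0, Xie1, Xie2, Xie3, Xie4,
    Pi.smul_apply, Pi.zero_apply, Prod.smul_mk, smul_eq_mul, Prod.mk_sub_mk,
    sub_zero, zero_sub, Prod.mk.injEq, Prod.ext_iff]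
  try norm_num
  try (repeat' apply And.intro)
  all_goals first | trivial | ring

lemma br30 : vbracket (Xi 3) (Xi 0) = (-1:ℝ) • Xi 1 := by
  funext p
  simp only [vbracket, fd0, fd1, fd2, fd3, fd4, Xie0, Xie1, Xie2, Xie3, Xie4,
    Pi.smul_apply, Pi.zero_apply, Prod.smul_mk, smul_eq_mul, Prod.mk_sub_mk,
    sub_zero, zero_sub, Prod.mk.injEq, Prod.ext_iff]
  try norm_num
  try (repeat' apply And.intro)
  all_goals first | trivial | ring

lemma br31 : vbracket (Xi 3) (Xi 1) = (0 : E4 → E4) := by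
  funext p
  simp only [vbracket, fd0, fd1, fd2, fd3, fd4, Xie0, Xie1, Xie2, Xie3, Xie4,
    Pi.smul_apply, Pi.zero_apply, Prod.smul_mk, smul_eq_mul, Prod.mk_sub_mk,
    sub_zero, zero_sub, Prod.mk.injEq, Prod.ext_iff]
  try norm_num
  try (repeat' apply And.intro)
  all_goals first | trivial | ring

lemma br32 : vbracket (Xi 3) (Xi 2) = (-1:ℝ) • Xi 3 := by
  funext p
  simp only [vbracket, fd0, fd1, fd2, fd3, fd4, Xie0, Xie1, Xie2, Xie3, Xie4,
    Pi.smul_apply, Pi.zero_apply, Prod.smul_mk, smul_eq_mul, Prod.mk_sub_mk,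
    sub_zero, zero_sub, Prod.mk.injEq, Prod.ext_iff]
  try norm_num
  try (repeat' apply And.intro)
  all_goals first | trivial | ring

lemma br33 : vbracket (Xi 3) (Xi 3) = (0 : E4 → E4) := by
  funext p
  simp only [vbracket, fd0, fd1, fd2, fd3, fd4, Xie0, Xie1, Xie2, Xie3, Xie4,
    Pi.smul_apply, Pi.zero_apply, Prod.smul_mk, smul_eq_mul, Prod.mk_sub_mk,
    sub_zero, zero_sub, Prod.mk.injEq, Prod.ext_iff]
  try norm_num
  try (repeat' apply And.intro)
  all_goals first | trivial | ring

lemma br34 : vbracket (Xi 3) (Xi 4) = (0 : E4 → E4) := by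
  funext p
  simp only [vbracket, fd0, fd1, fd2, fd3, fd4, Xie0, Xie1, Xie2, Xie3, Xie4,
    Pi.smul_apply, Pi.zero_apply, Prod.smul_mk, smul_eq_mul, Prod.mk_sub_mk,
    sub_zero, zero_sub, Prod.mk.injEq, Prod.ext_iff]
  try norm_num
  try (repeat' apply And.intro)
  all_goals first | trivial | ring

lemma br40 : vbracket (Xi 4) (Xi 0) = (-1:ℝ) • Xi 2 := by
  funext p
  simp only [vbracket, fd0, fd1, fd2, fd3, fd4, Xie0, Xie1, Xie2, Xie3, Xie4,
    Pi.smul_apply, Pi.zero_apply, Prod.smul_mk, smul_eq_mul, Prod.mk_sub_mk,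
    sub_zero, zero_sub, Prod.mk.injEq, Prod.ext_iff]
  try norm_num
  try (repeat' apply And.intro)
  all_goals first | trivial | ring

lemma br41 : vbracket (Xi 4) (Xi 1) = (-1:ℝ) • Xi 3 := by
  funext p
  simp only [vbracket, fd0, fd1, fd2, fd3, fd4, Xie0, Xie1, Xie2, Xie3, Xie4,
    Pi.smul_apply, Pi.zero_apply, Prod.smul_mk, smul_eq_mul, Prod.mk_sub_mk,
    sub_zero, zero_sub, Prod.mk.injEq, Prod.ext_iff]
  try norm_num
  try (repeat' apply And.intro)
  all_goals first | trivial | ring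

lemma br42 : vbracket (Xi 4) (Xi 2) = (-2:ℝ) • Xi 4 := by
  funext p
  simp only [vbracket, fd0, fd1, fd2, fd3, fd4, Xie0, Xie1, Xie2, Xie3, Xie4,
    Pi.smul_apply, Pi.zero_apply, Prod.smul_mk, smul_eq_mul, Prod.mk_sub_mk,
    sub_zero, zero_sub, Prod.mk.injEq, Prod.ext_iff]
  try norm_num
  try (repeat' apply And.intro)
  all_goals first | trivial | ring

lemma br43 : vbracket (Xi 4) (Xi 3) = (0 : E4 → E4) := by
  funext p
  simp only [vbracket, fd0, fd1, fd2, fd3, fd4, Xie0, Xie1, Xie2, Xie3, Xie4,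
    Pi.smul_apply, Pi.zero_apply, Prod.smul_mk, smul_eq_mul, Prod.mk_sub_mk,
    sub_zero, zero_sub, Prod.mk.injEq, Prod.ext_iff]
  try norm_num
  try (repeat' apply And.intro)
  all_goals first | trivial | ring

lemma br44 : vbracket (Xi 4) (Xi 4) = (0 : E4 → E4) := by
  funext p
  simp only [vbracket, fd0, fd1, fd2, fd3, fd4, Xie0, Xie1, Xie2, Xie3, Xie4,
    Pi.smul_apply, Pi.zero_apply, Prod.smul_mk, smul_eq_mul, Prod.mk_sub_mk,
    sub_zero, zero_sub, Prod.mk.injEq, Prod.ext_iff]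
  try norm_num
  try (repeat' apply And.intro)
  all_goals first | trivial | ring


/-- The five vector fields are closed under the Lie bracket and span a
five-dimensional Lie algebra. -/
theorem burgers2_symmetry_algebra :
    (∀ i j : Fin 5, vbracket (Xi i) (Xi j) ∈ Submodule.span ℝ (Set.range Xi)) ∧
    LinearIndependent ℝ Xi := by
  constructor
  · intro i j
    fin_cases i <;> fin_cases j
    · show vbracket (Xi 0) (Xi 0) ∈ _
      rw [br00]; exact Submodule.zero_mem _
    · show vbracket (Xi 0) (Xi 1) ∈ _
      rw [br01]; exact Submodule.zero_mem _
    · show vbracket (Xi 0) (Xi 2) ∈ _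
      rw [br02]; exact smul_mem_span_Xi 2 0
    · show vbracket (Xi 0) (Xi 3) ∈ _
      rw [br03]; exact mem_span_Xi 1
    · show vbracket (Xi 0) (Xi 4) ∈ _
      rw [br04]; exact mem_span_Xi 2
    · show vbracket (Xi 1) (Xi 0) ∈ _
      rw [br10]; exact Submodule.zero_mem _
    · show vbracket (Xi 1) (Xi 1) ∈ _
      rw [br11]; exact Submodule.zero_mem _
    · show vbracket (Xi 1) (Xi 2) ∈ _
      rw [br12]; exact mem_span_Xi 1
    · show vbracket (Xi 1) (Xi 3) ∈ _
      rw [br13]; exact Submodule.zero_mem _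
    · show vbracket (Xi 1) (Xi 4) ∈ _
      rw [br14]; exact mem_span_Xi 3
    · show vbracket (Xi 2) (Xi 0) ∈ _
      rw [br20]; exact smul_mem_span_Xi (-2) 0
    · show vbracket (Xi 2) (Xi 1) ∈ _
      rw [br21]; exact smul_mem_span_Xi (-1) 1
    · show vbracket (Xi 2) (Xi 2) ∈ _
      rw [br22]; exact Submodule.zero_mem _
    · show vbracket (Xi 2) (Xi 3) ∈ _
      rw [br23]; exact mem_span_Xi 3
    · show vbracket (Xi 2) (Xi 4) ∈ _
      rw [br24]; exact smul_mem_span_Xi 2 4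
    · show vbracket (Xi 3) (Xi 0) ∈ _
      rw [br30]; exact smul_mem_span_Xi (-1) 1
    · show vbracket (Xi 3) (Xi 1) ∈ _
      rw [br31]; exact Submodule.zero_mem _
    · show vbracket (Xi 3) (Xi 2) ∈ _
      rw [br32]; exact smul_mem_span_Xi (-1) 3
    · show vbracket (Xi 3) (Xi 3) ∈ _
      rw [br33]; exact Submodule.zero_mem _
    · show vbracket (Xi 3) (Xi 4) ∈ _
      rw [br34]; exact Submodule.zero_mem _
    · show vbracket (Xi 4) (Xi 0) ∈ _
      rw [br40]; exact smul_mem_span_Xi (-1) 2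
    · show vbracket (Xi 4) (Xi 1) ∈ _
      rw [br41]; exact smul_mem_span_Xi (-1) 3
    · show vbracket (Xi 4) (Xi 2) ∈ _
      rw [br42]; exact smul_mem_span_Xi (-2) 4
    · show vbracket (Xi 4) (Xi 3) ∈ _
      rw [br43]; exact Submodule.zero_mem _
    · show vbracket (Xi 4) (Xi 4) ∈ _
      rw [br44]; exact Submodule.zero_mem _
  · rw [Fintype.linearIndependent_iff]
    intro g hg
    have h0 := congrFun hg ((0, 0, 0, 0) : E4)
    have h1 := congrFun hg ((1, 0, 0, 0) : E4)
    simp only [Finset.sum_apply, Fin.sum_univ_five, Pi.smul_apply, Xie0, Xie1, Xie2, Xie3,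
      Xie4, Prod.smul_mk, smul_eq_mul, Prod.mk_add_mk, Pi.zero_apply, Prod.ext_iff,
      Prod.mk.injEq] at h0 h1
    norm_num at h0 h1
    obtain ⟨a0, a1, a3, a4⟩ := h0
    intro i
    fin_cases i <;> simp_all <;> linarith
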